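/- Let μ be a nonnegative locally finite Borel measure on ℝⁿ, p > 1, ε ∈ (0,1), α₁ > 0, R > 0, and x ∈ ℝⁿ. Set h(x,t) = (μ(B_t(x))/t^{n-1})^{1/(p-1)} and h̃(x,t) = Σ_{i=1}^∞ ε^{α₁ i} ( h(x, ε^{-i} t)[ε^{-i}t ≤ R/2] + h(x, R/2)[ε^{-i}t > R/2] ). Then for every ρ ∈ (0, R/2], ∫_0^ρ h̃(x,t)/t dt ≤ W̃^ρ_{1/p,p}(μ)(x) + C (ρ/R)^{α₁} W^R_{1/p,p}(μ)(x), where W̃^ρ_{1/p,p}(μ)(x) = Σ_{i=1}^∞ ε^{α₁ i} ( W^{ε^{-i}ρ}_{1/p,p}(μ)(x)[ε^{-i}ρ ≤ R/2] + W^{R/2}_{1/p,p}(μ)(x)[ε^{-i}ρ > R/2] ) and C depends only on ε and α₁. -/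

import Mathlib

open MeasureTheory Metric Set
open scoped ENNReal

/-- `h(x,t) = (μ(B_t(x))/t^{n-1})^{1/(p-1)}`, the Wolff potential integrand. -/
noncomputable def wolffIntegrand (n : ℕ) (p : ℝ) (μ : Measure (EuclideanSpace ℝ (Fin n)))
    (x : EuclideanSpace ℝ (Fin n)) (t : ℝ) : ℝ≥0∞ :=
  (μ (ball x t) / ENNReal.ofReal (t ^ ((n:ℝ) - 1))) ^ (1 / (p - 1))

/-- The truncated Wolff potential `W^ρ_{1/p,p}(μ)(x) = ∫_0^ρ h(x,t) dt/t`. -/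
noncomputable def wolffPotential (n : ℕ) (p : ℝ) (μ : Measure (EuclideanSpace ℝ (Fin n)))
    (x : EuclideanSpace ℝ (Fin n)) (ρ : ℝ) : ℝ≥0∞ :=
  ∫⁻ t in Ioo (0:ℝ) ρ, wolffIntegrand n p μ x t / ENNReal.ofReal t

lemma scale_lintegral {f : ℝ → ℝ≥0∞} (hf : Measurable f) {c ρ : ℝ} (hc : 0 < c) :
    ∫⁻ t in Ioo (0:ℝ) ρ, f (c * t) / ENNReal.ofReal t
      = ∫⁻ s in Ioo (0:ℝ) (c * ρ), f s / ENNReal.ofReal s := by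
  have hmeas : Measurable fun s : ℝ => f s / ENNReal.ofReal s :=
    hf.div (ENNReal.measurable_ofReal.comp measurable_id)
  have hpre : (fun t : ℝ => c * t) ⁻¹' (Ioo 0 (c * ρ)) = Ioo (0:ℝ) ρ := by
    ext t
    simp only [mem_preimage, mem_Ioo]
    rw [mul_pos_iff_of_pos_left hc, mul_lt_mul_iff_right₀ hc]
  have hmap : Measure.map (c * ·) (volume.restrict (Ioo (0:ℝ) ρ))
      = ENNReal.ofReal c⁻¹ • volume.restrict (Ioo (0:ℝ) (c * ρ)) := by
    rw [← hpre, ← Measure.restrict_map (measurable_const_mul c) measurableSet_Ioo,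
      Real.map_volume_mul_left hc.ne', abs_of_pos (inv_pos.2 hc), Measure.restrict_smul]
  have key := lintegral_map hmeas (measurable_const_mul c) (μ := volume.restrict (Ioo (0:ℝ) ρ))
  rw [hmap, lintegral_smul_measure] at key
  have hA0 : ENNReal.ofReal c ≠ 0 := by simp [hc]
  have hAt : ENNReal.ofReal c ≠ ⊤ := ENNReal.ofReal_ne_top
  have hptwise : ∀ t ∈ Ioo (0:ℝ) ρ,
      f (c * t) / ENNReal.ofReal t = ENNReal.ofReal c * (f (c * t) / ENNReal.ofReal (c * t)) := by
    intro t ht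
    rw [ENNReal.ofReal_mul hc.le, div_eq_mul_inv, div_eq_mul_inv,
      ENNReal.mul_inv (Or.inl hA0) (Or.inl hAt)]
    have : ENNReal.ofReal c * (f (c*t) * ((ENNReal.ofReal c)⁻¹ * (ENNReal.ofReal t)⁻¹))
        = f (c*t) * (ENNReal.ofReal t)⁻¹ * (ENNReal.ofReal c * (ENNReal.ofReal c)⁻¹) := by ring
    rw [this, ENNReal.mul_inv_cancel hA0 hAt, mul_one]
  rw [setLIntegral_congr_fun measurableSet_Ioo hptwise,
    lintegral_const_mul _ (by fun_prop), ← key, smul_eq_mul, ← mul_assoc, ← ENNReal.ofReal_mul hc.le,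
    mul_inv_cancel₀ hc.ne', ENNReal.ofReal_one, one_mul]

lemma lintegral_inv_Ioo {a b : ℝ} (ha : 0 < a) (hab : a ≤ b) :
    ∫⁻ t in Ioo a b, (ENNReal.ofReal t)⁻¹ = ENNReal.ofReal (Real.log (b / a)) := by
  have hcong : ∀ t ∈ Ioo a b, (ENNReal.ofReal t)⁻¹ = ENNReal.ofReal t⁻¹ := fun t ht =>
    (ENNReal.ofReal_inv_of_pos (ha.trans ht.1)).symm
  rw [setLIntegral_congr_fun measurableSet_Ioo hcong]
  have hii : IntervalIntegrable (fun t : ℝ => t⁻¹) volume a b := by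
    apply intervalIntegral.intervalIntegrable_inv
    · intro x hx
      rw [uIcc_of_le hab] at hx
      exact ne_of_gt (lt_of_lt_of_le ha hx.1)
    · exact continuous_id.continuousOn
  have hint : IntegrableOn (fun t : ℝ => t⁻¹) (Ioo a b) :=
    ((intervalIntegrable_iff_integrableOn_Ioc_of_le hab).1 hii).mono_set Ioo_subset_Ioc_self
  rw [← MeasureTheory.ofReal_integral_eq_lintegral_ofReal hint
    (ae_restrict_of_forall_mem measurableSet_Ioo
      (fun t ht => (inv_pos.2 (ha.trans ht.1)).le))]
  congr 1
  rw [← integral_Ioc_eq_integral_Ioo, ← intervalIntegral.integral_of_le hab]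
  exact integral_inv_of_pos ha (ha.trans_le hab)

lemma summable_ite_ge {g : ℕ → ℝ} (hg : Summable g) (m : ℕ) :
    Summable (fun i => if m ≤ i then g i else 0) := by
  have : (fun i => if m ≤ i then g i else 0) = (Ici m).indicator g := by
    ext i; simp [Set.indicator_apply]
  rw [this]; exact hg.indicator _

lemma tsum_ite_ge_shift {g : ℕ → ℝ} (hg : Summable g) (m : ℕ) :
    ∑' i, (if m ≤ i then g i else 0) = ∑' k, g (m + k) := by
  induction m with
  | zero => simp
  | succ m ih =>
    have hδ : Summable (fun i => if i = m then g m else 0) :=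
      (hasSum_ite_eq m (g m)).summable
    have hsplit : (fun i => if m ≤ i then g i else 0)
        = fun i => (if m + 1 ≤ i then g i else 0) + (if i = m then g m else 0) := by
      ext i
      rcases eq_or_ne i m with rfl | h
      · simp
      · rcases le_or_gt (m+1) i with h1 | h1
        · have h2 : m ≤ i := by omega
          simp [h, h1, h2]
        · have h2 : ¬ m ≤ i := by omega
          have h3 : ¬ m + 1 ≤ i := by omega
          simp [h, h2, h3]
    have hrhs : Summable fun k => g (m + k) := by
      have := (summable_nat_add_iff m).2 hg
      simpa [add_comm] using this
    have e1 : (∑' i, (if m ≤ i then g i else 0))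
        = (∑' i, (if m + 1 ≤ i then g i else 0)) + g m := by
      rw [hsplit, Summable.tsum_add (summable_ite_ge hg (m+1)) hδ, tsum_ite_eq]
    have e2 : (∑' k, g (m + k)) = g m + ∑' k, g (m + 1 + k) := by
      rw [Summable.tsum_eq_zero_add hrhs]
      simp only [add_zero]
      congr 1
      exact tsum_congr fun k => by rw [show m + (k+1) = m + 1 + k by omega]
    rw [ih, e2] at e1
    linarith

lemma geom_log_sum_bound {ε α₁ : ℝ} (hε0 : 0 < ε) (hε1 : ε < 1) (hα : 0 < α₁) :
    ∀ a : ℝ, 0 < a →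
      (∑' i : ℕ, if ε ^ ((i:ℝ)+1) < a
        then ENNReal.ofReal (ε ^ (α₁*((i:ℝ)+1))) * ENNReal.ofReal (Real.log (a * ε ^ (-((i:ℝ)+1))))
        else 0) ≤ ENNReal.ofReal ((2/α₁ * (1 - ε ^ (α₁/2))⁻¹) * a ^ α₁) := by
  set r : ℝ := ε ^ (α₁/2) with hrdef
  have hr0 : 0 < r := Real.rpow_pos_of_pos hε0 _
  have hr1 : r < 1 := Real.rpow_lt_one hε0.le hε1 (by positivity)
  have hA : ∀ i : ℕ, r ^ (i+1) = ε ^ ((α₁/2) * ((i:ℝ)+1)) := by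
    intro i
    rw [hrdef, ← Real.rpow_natCast (ε ^ (α₁/2)) (i+1), ← Real.rpow_mul hε0.le]
    push_cast
    ring_nf
  intro a ha
  set v : ℝ := 2/α₁ * a ^ (α₁/2) with hvdef
  have hv0 : 0 < v := by positivity
  set u : ℕ → ℝ := fun i => if ε ^ ((i:ℝ)+1) < a then v * r ^ (i+1) else 0 with hudef
  have hu_nonneg : ∀ i, 0 ≤ u i := by
    intro i
    simp only [hudef]
    split
    · positivity
    · exact le_refl 0
  have hgeom : Summable fun i : ℕ => v * r ^ (i+1) := by
    have := (summable_geometric_of_lt_one hr0.le hr1).mul_left (v * r)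
    refine this.congr fun i => ?_
    ring
  have hu_sum : Summable u := by
    refine Summable.of_nonneg_of_le hu_nonneg (fun i => ?_) hgeom
    simp only [hudef]
    split
    · exact le_refl _
    · positivity
  -- termwise bound in ENNReal
  have hterm : ∀ i : ℕ,
      (if ε ^ ((i:ℝ)+1) < a
        then ENNReal.ofReal (ε ^ (α₁*((i:ℝ)+1))) * ENNReal.ofReal (Real.log (a * ε ^ (-((i:ℝ)+1))))
        else 0) ≤ ENNReal.ofReal (u i) := by
    intro i
    by_cases hcond : ε ^ ((i:ℝ)+1) < a
    swap
    · simp only [hcond, if_false]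
      exact zero_le
    simp only [hudef, hcond, if_true]
    ·
      rw [← ENNReal.ofReal_mul (Real.rpow_nonneg hε0.le _)]
      apply ENNReal.ofReal_le_ofReal
      set j : ℝ := (i:ℝ)+1 with hjdef
      have hεj : (0:ℝ) < ε ^ j := Real.rpow_pos_of_pos hε0 _
      have hy1 : 1 < a * ε ^ (-j) := by
        rw [Real.rpow_neg hε0.le, ← div_eq_mul_inv, lt_div_iff₀ hεj, one_mul]
        exact hcond
      have hy0 : (0:ℝ) < a * ε ^ (-j) := lt_trans one_pos hy1
      have hlog : Real.log (a * ε ^ (-j)) ≤ 2/α₁ * (a * ε ^ (-j)) ^ (α₁/2) := by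
        have l1 : Real.log (a * ε ^ (-j)) = 2/α₁ * Real.log ((a * ε ^ (-j)) ^ (α₁/2)) := by
          rw [Real.log_rpow hy0]
          field_simp
        have l2 : Real.log ((a * ε ^ (-j)) ^ (α₁/2)) ≤ (a * ε ^ (-j)) ^ (α₁/2) := by
          have := Real.log_le_sub_one_of_pos (x := (a * ε ^ (-j)) ^ (α₁/2)) (by positivity)
          linarith
        rw [l1]
        exact mul_le_mul_of_nonneg_left l2 (by positivity)
      have hsplit : (a * ε ^ (-j)) ^ (α₁/2) = a ^ (α₁/2) * ε ^ (-j * (α₁/2)) := by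
        rw [Real.mul_rpow ha.le (Real.rpow_nonneg hε0.le _), Real.rpow_mul hε0.le]
      calc ε ^ (α₁*j) * Real.log (a * ε ^ (-j))
          ≤ ε ^ (α₁*j) * (2/α₁ * (a ^ (α₁/2) * ε ^ (-j * (α₁/2)))) := by
            rw [← hsplit]
            exact mul_le_mul_of_nonneg_left hlog (Real.rpow_nonneg hε0.le _)
        _ = v * (ε ^ (α₁*j) * ε ^ (-j * (α₁/2))) := by rw [hvdef]; ring
        _ = v * r ^ (i+1) := by
            rw [← Real.rpow_add hε0, hA i, ← hjdef]
            congr 1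
            congr 1
            ring
  calc (∑' i : ℕ, if ε ^ ((i:ℝ)+1) < a
        then ENNReal.ofReal (ε ^ (α₁*((i:ℝ)+1))) * ENNReal.ofReal (Real.log (a * ε ^ (-((i:ℝ)+1))))
        else 0)
      ≤ ∑' i : ℕ, ENNReal.ofReal (u i) := ENNReal.tsum_le_tsum hterm
    _ = ENNReal.ofReal (∑' i, u i) := (ENNReal.ofReal_tsum_of_nonneg hu_nonneg hu_sum).symm
    _ ≤ ENNReal.ofReal ((2/α₁ * (1 - r)⁻¹) * a ^ α₁) := by
      apply ENNReal.ofReal_le_ofReal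
      by_cases hex : ∃ i : ℕ, ε ^ ((i:ℝ)+1) < a
      · set i₀ := Nat.find hex with hi₀def
        have hcond₀ : ε ^ ((i₀:ℝ)+1) < a := Nat.find_spec hex
        have hle_w : ∀ i, u i ≤ (if i₀ ≤ i then v * r ^ (i+1) else 0) := by
          intro i
          by_cases h : i₀ ≤ i
          · simp only [hudef, h, if_true]
            split
            · exact le_refl _
            · positivity
          · have hnc : ¬ ε ^ ((i:ℝ)+1) < a := Nat.find_min hex (by omega)
            simp [hudef, h, hnc]
        have hsum_w : Summable (fun i => if i₀ ≤ i then v * r ^ (i+1) else 0) :=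
          summable_ite_ge hgeom i₀
        have hsumw : (∑' i, (if i₀ ≤ i then v * r ^ (i+1) else 0)) = v * r ^ (i₀+1) * (1-r)⁻¹ := by
          rw [tsum_ite_ge_shift hgeom i₀]
          have : ∀ k : ℕ, v * r ^ (i₀ + k + 1) = (v * r ^ (i₀+1)) * r ^ k := by
            intro k; ring
          rw [tsum_congr this, tsum_mul_left, tsum_geometric_of_lt_one hr0.le hr1]
        have hr_i₀ : r ^ (i₀+1) ≤ a ^ (α₁/2) := by
          rw [hA i₀, mul_comm, Real.rpow_mul hε0.le]
          exact Real.rpow_le_rpow (Real.rpow_nonneg hε0.le _) hcond₀.le (by positivity)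
        have : (∑' i, u i) ≤ v * r ^ (i₀+1) * (1-r)⁻¹ := by
          rw [← hsumw]
          exact Summable.tsum_le_tsum hle_w hu_sum hsum_w
        have haa : a ^ (α₁/2) * a ^ (α₁/2) = a ^ α₁ := by
          rw [← Real.rpow_add ha]
          congr 1
          ring
        calc (∑' i, u i) ≤ v * r ^ (i₀+1) * (1-r)⁻¹ := this
          _ ≤ v * a ^ (α₁/2) * (1-r)⁻¹ := by
              apply mul_le_mul_of_nonneg_right _ (inv_nonneg.2 (by linarith))
              exact mul_le_mul_of_nonneg_left hr_i₀ hv0.le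
          _ = (2/α₁ * (1 - r)⁻¹) * a ^ α₁ := by rw [hvdef, ← haa]; ring
      · push_neg at hex
        have : u = fun _ => 0 := by
          funext i
          simp [hudef, not_lt.2 (hex i)]
        rw [this, tsum_zero]
        exact mul_nonneg (mul_nonneg (by positivity) (inv_nonneg.2 (by linarith)))
          (Real.rpow_nonneg ha.le _)

lemma wolffIntegrand_measurable (n : ℕ) (p : ℝ) (μ : Measure (EuclideanSpace ℝ (Fin n)))
    (x : EuclideanSpace ℝ (Fin n)) : Measurable (wolffIntegrand n p μ x) := by
  apply Measurable.pow _ measurable_const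
  apply Measurable.div
  · exact Monotone.measurable (fun t₁ t₂ h => measure_mono (ball_subset_ball h))
  · exact ENNReal.measurable_ofReal.comp (measurable_id.pow measurable_const)

lemma wolffIntegrand_half_le (n : ℕ) (p : ℝ) (hp : 1 < p)
    (μ : Measure (EuclideanSpace ℝ (Fin n))) (x : EuclideanSpace ℝ (Fin n))
    {R : ℝ} (hR : 0 < R) :
    wolffIntegrand n p μ x (R/2)
      ≤ ENNReal.ofReal ((2 ^ (max ((n:ℝ)-1) 0)) ^ (1/(p-1)) / Real.log 2)
        * wolffPotential n p μ x R := by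
  set q : ℝ := 1/(p-1) with hqdef
  have hq : 0 < q := by rw [hqdef]; exact one_div_pos.2 (by linarith)
  set ν : ℝ := (n:ℝ) - 1 with hνdef
  set M : ℝ := 2 ^ (max ν 0) with hMdef
  have hM1 : (1:ℝ) ≤ M := Real.one_le_rpow one_le_two (le_max_right _ _)
  have hM0 : (0:ℝ) < M := lt_of_lt_of_le one_pos hM1
  have hR2 : (0:ℝ) < R/2 := by linarith
  -- pointwise comparison
  have hpt : ∀ t ∈ Ioo (R/2) R,
      wolffIntegrand n p μ x (R/2) ≤ ENNReal.ofReal (M ^ q) * wolffIntegrand n p μ x t := by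
    intro t ht
    have ht0 : 0 < t := lt_trans hR2 ht.1
    have htν : t ^ ν ≤ M * (R/2) ^ ν := by
      rcases le_or_gt 0 ν with hν | hν
      · have : max ν 0 = ν := max_eq_left hν
        rw [hMdef, this, ← Real.mul_rpow zero_le_two hR2.le]
        have : (2:ℝ) * (R/2) = R := by ring
        rw [this]
        exact Real.rpow_le_rpow ht0.le ht.2.le hν
      · have : max ν 0 = 0 := max_eq_right hν.le
        rw [hMdef, this, Real.rpow_zero, one_mul]
        exact Real.rpow_le_rpow_of_nonpos hR2 ht.1.le hν.le
    have hMne0 : ENNReal.ofReal M ≠ 0 := by simp [hM0]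
    have hMnetop : ENNReal.ofReal M ≠ ⊤ := ENNReal.ofReal_ne_top
    have hdiv : μ (ball x (R/2)) / ENNReal.ofReal ((R/2) ^ ν)
        ≤ ENNReal.ofReal M * (μ (ball x t) / ENNReal.ofReal (t ^ ν)) := by
      calc μ (ball x (R/2)) / ENNReal.ofReal ((R/2) ^ ν)
          = (ENNReal.ofReal M * μ (ball x (R/2)))
            / (ENNReal.ofReal M * ENNReal.ofReal ((R/2) ^ ν)) := by
            rw [ENNReal.mul_div_mul_left _ _ hMne0 hMnetop]
        _ ≤ (ENNReal.ofReal M * μ (ball x t)) / ENNReal.ofReal (t ^ ν) := by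
            apply ENNReal.div_le_div
            · exact mul_le_mul_right (measure_mono (ball_subset_ball (le_of_lt ht.1))) _
            · rw [← ENNReal.ofReal_mul hM0.le]
              exact ENNReal.ofReal_le_ofReal htν
        _ = ENNReal.ofReal M * (μ (ball x t) / ENNReal.ofReal (t ^ ν)) := by
            rw [mul_div_assoc]
    calc wolffIntegrand n p μ x (R/2)
        = (μ (ball x (R/2)) / ENNReal.ofReal ((R/2) ^ ν)) ^ q := rfl
      _ ≤ (ENNReal.ofReal M * (μ (ball x t) / ENNReal.ofReal (t ^ ν))) ^ q :=
          ENNReal.rpow_le_rpow hdiv hq.le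
      _ = ENNReal.ofReal (M ^ q) * wolffIntegrand n p μ x t := by
          rw [ENNReal.mul_rpow_of_nonneg _ _ hq.le, ← ENNReal.ofReal_rpow_of_pos hM0]
          rfl
  -- integral comparison
  have hKne0 : ENNReal.ofReal (M ^ q) ≠ 0 := by
    simp [Real.rpow_pos_of_pos hM0]
  have hKnetop : ENNReal.ofReal (M ^ q) ≠ ⊤ := ENNReal.ofReal_ne_top
  set K : ℝ≥0∞ := ENNReal.ofReal (M ^ q) with hKdef
  have key : K⁻¹ * wolffIntegrand n p μ x (R/2) * ENNReal.ofReal (Real.log 2)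
      ≤ wolffPotential n p μ x R := by
    have step1 : ∫⁻ t in Ioo (R/2) R, K⁻¹ * wolffIntegrand n p μ x (R/2) * (ENNReal.ofReal t)⁻¹
        ≤ ∫⁻ t in Ioo (R/2) R, wolffIntegrand n p μ x t / ENNReal.ofReal t := by
      apply lintegral_mono_ae
      apply ae_restrict_of_forall_mem measurableSet_Ioo
      intro t ht
      rw [div_eq_mul_inv]
      apply mul_le_mul_left
      have := hpt t ht
      calc K⁻¹ * wolffIntegrand n p μ x (R/2) ≤ K⁻¹ * (K * wolffIntegrand n p μ x t) :=
            mul_le_mul_right this _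
        _ = wolffIntegrand n p μ x t := by
            rw [← mul_assoc, ENNReal.inv_mul_cancel hKne0 hKnetop, one_mul]
    have step2 : ∫⁻ t in Ioo (R/2) R, K⁻¹ * wolffIntegrand n p μ x (R/2) * (ENNReal.ofReal t)⁻¹
        = K⁻¹ * wolffIntegrand n p μ x (R/2) * ENNReal.ofReal (Real.log 2) := by
      rw [lintegral_const_mul _ (by fun_prop), lintegral_inv_Ioo hR2 (by linarith)]
      congr 2
      have : R/(R/2) = 2 := by field_simp
      rw [this]
    have step3 : ∫⁻ t in Ioo (R/2) R, wolffIntegrand n p μ x t / ENNReal.ofReal t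
        ≤ wolffPotential n p μ x R := by
      apply lintegral_mono_set
      intro t ht
      exact ⟨lt_trans hR2 ht.1, ht.2⟩
    rw [← step2]
    exact le_trans step1 step3
  calc wolffIntegrand n p μ x (R/2)
      = (K * (ENNReal.ofReal (Real.log 2))⁻¹)
        * (K⁻¹ * wolffIntegrand n p μ x (R/2) * ENNReal.ofReal (Real.log 2)) := by
        have hlog0 : ENNReal.ofReal (Real.log 2) ≠ 0 := by
          simp [Real.log_pos one_lt_two]
        have hlogtop : ENNReal.ofReal (Real.log 2) ≠ ⊤ := ENNReal.ofReal_ne_top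
        calc wolffIntegrand n p μ x (R/2)
            = (K * K⁻¹) * wolffIntegrand n p μ x (R/2)
              * ((ENNReal.ofReal (Real.log 2))⁻¹ * ENNReal.ofReal (Real.log 2)) := by
              rw [ENNReal.mul_inv_cancel hKne0 hKnetop,
                ENNReal.inv_mul_cancel hlog0 hlogtop, one_mul, mul_one]
          _ = _ := by ring
    _ ≤ (K * (ENNReal.ofReal (Real.log 2))⁻¹) * wolffPotential n p μ x R :=
        mul_le_mul_right key _
    _ = ENNReal.ofReal ((2 ^ (max ((n:ℝ)-1) 0)) ^ (1/(p-1)) / Real.log 2)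
        * wolffPotential n p μ x R := by
        congr 1
        rw [hKdef, ENNReal.ofReal_div_of_pos (Real.log_pos one_lt_two)]
        rfl

/-- `∫_0^ρ h̃(x,t)/t dt ≤ W̃^ρ_{1/p,p}(μ)(x) + C (ρ/R)^{α₁} W^R_{1/p,p}(μ)(x)` with
`C = C(ε, α₁)`, where `h̃` and `W̃` are the geometric tail sums of `h` and `W` (the sum runs
over `i ≥ 1`, written below as `i + 1` with `i : ℕ`). -/
theorem tail_wolff_integral_bound (n : ℕ) (p ε α₁ : ℝ)
    (hp : 1 < p) (hε0 : 0 < ε) (hε1 : ε < 1) (hα : 0 < α₁) :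
    ∃ C : ℝ, 0 < C ∧
      ∀ (μ : Measure (EuclideanSpace ℝ (Fin n))) [IsLocallyFiniteMeasure μ]
        (R : ℝ), 0 < R → ∀ (x : EuclideanSpace ℝ (Fin n)) (ρ : ℝ), 0 < ρ → ρ ≤ R / 2 →
        (∫⁻ t in Ioo (0:ℝ) ρ,
            (∑' i : ℕ, ENNReal.ofReal (ε ^ (α₁ * ((i:ℝ) + 1))) *
              (if ε ^ (-((i:ℝ) + 1)) * t ≤ R / 2
                then wolffIntegrand n p μ x (ε ^ (-((i:ℝ) + 1)) * t)
                else wolffIntegrand n p μ x (R / 2))) / ENNReal.ofReal t)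
          ≤ (∑' i : ℕ, ENNReal.ofReal (ε ^ (α₁ * ((i:ℝ) + 1))) *
              (if ε ^ (-((i:ℝ) + 1)) * ρ ≤ R / 2
                then wolffPotential n p μ x (ε ^ (-((i:ℝ) + 1)) * ρ)
                else wolffPotential n p μ x (R / 2)))
            + ENNReal.ofReal (C * (ρ / R) ^ α₁) * wolffPotential n p μ x R := by
  have hp1 : (0:ℝ) < p - 1 := by linarith
  set K : ℝ := (2 ^ (max ((n:ℝ)-1) 0)) ^ (1/(p-1)) / Real.log 2 with hKdef
  have hK : 0 < K := div_pos
    (Real.rpow_pos_of_pos (Real.rpow_pos_of_pos two_pos _) _) (Real.log_pos one_lt_two)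
  set C'' : ℝ := 2/α₁ * (1 - ε ^ (α₁/2))⁻¹ with hCdef
  have hrε1 : ε ^ (α₁/2) < 1 := Real.rpow_lt_one hε0.le hε1 (by positivity)
  have hC'' : 0 < C'' := mul_pos (by positivity) (inv_pos.2 (by linarith))
  refine ⟨K * C'' * 2 ^ α₁, mul_pos (mul_pos hK hC'') (Real.rpow_pos_of_pos two_pos _), ?_⟩
  intro μ _ R hR x ρ hρ hρR
  have hmeas_h : Measurable (wolffIntegrand n p μ x) := wolffIntegrand_measurable n p μ x
  have hcpos : ∀ i : ℕ, (0:ℝ) < ε ^ (-((i:ℝ)+1)) := fun i => Real.rpow_pos_of_pos hε0 _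
  have hccpos : ∀ i : ℕ, (0:ℝ) < ε ^ (((i:ℝ)+1)) := fun i => Real.rpow_pos_of_pos hε0 _
  have hmulinv : ∀ i : ℕ, ε ^ (-((i:ℝ)+1)) * ε ^ (((i:ℝ)+1)) = 1 := fun i => by
    rw [← Real.rpow_add hε0, neg_add_cancel, Real.rpow_zero]
  set g : ℕ → ℝ → ℝ≥0∞ := fun i t =>
    if ε ^ (-((i:ℝ)+1)) * t ≤ R/2
      then wolffIntegrand n p μ x (ε ^ (-((i:ℝ)+1)) * t)
      else wolffIntegrand n p μ x (R/2) with hgdef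
  have hmeas_g : ∀ i : ℕ, Measurable (g i) := by
    intro i
    apply Measurable.ite _ (hmeas_h.comp (measurable_const_mul _)) measurable_const
    exact measurableSet_Iic.preimage (measurable_const_mul _)
  set coef : ℕ → ℝ≥0∞ := fun i => ENNReal.ofReal (ε ^ (α₁ * ((i:ℝ) + 1))) with hcoefdef
  set h2 : ℝ≥0∞ := wolffIntegrand n p μ x (R/2) with hh2def
  set T : ℕ → ℝ≥0∞ := fun i =>
    if ε ^ (-((i:ℝ)+1)) * ρ ≤ R/2
      then wolffPotential n p μ x (ε ^ (-((i:ℝ)+1)) * ρ)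
      else wolffPotential n p μ x (R/2) with hTdef
  set O : ℕ → ℝ≥0∞ := fun i =>
    if ε ^ ((i:ℝ)+1) < 2*ρ/R
      then ENNReal.ofReal (Real.log ((2*ρ/R) * ε ^ (-((i:ℝ)+1))))
      else 0 with hOdef
  -- Step A : swap sum and integral
  have stepA : (∫⁻ t in Ioo (0:ℝ) ρ, (∑' i : ℕ, coef i * g i t) / ENNReal.ofReal t)
      = ∑' i : ℕ, coef i * ∫⁻ t in Ioo (0:ℝ) ρ, g i t / ENNReal.ofReal t := by
    have hpt : ∀ t : ℝ, (∑' i : ℕ, coef i * g i t) / ENNReal.ofReal t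
        = ∑' i : ℕ, coef i * (g i t / ENNReal.ofReal t) := by
      intro t
      rw [div_eq_mul_inv, ← ENNReal.tsum_mul_right]
      exact tsum_congr fun i => by rw [div_eq_mul_inv, mul_assoc]
    rw [lintegral_congr hpt]
    rw [lintegral_tsum (fun i => (show Measurable fun t => coef i * (g i t / ENNReal.ofReal t) from ((hmeas_g i).div (by fun_prop : Measurable fun t : ℝ => ENNReal.ofReal t)).const_mul (coef i)).aemeasurable)]
    exact tsum_congr fun i =>
      lintegral_const_mul (coef i) ((hmeas_g i).div (by fun_prop : Measurable fun t : ℝ => ENNReal.ofReal t))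
  -- Step B : bound each integral
  have stepB : ∀ i : ℕ, (∫⁻ t in Ioo (0:ℝ) ρ, g i t / ENNReal.ofReal t) ≤ T i + h2 * O i := by
    intro i
    by_cases hcase : ε ^ (-((i:ℝ)+1)) * ρ ≤ R/2
    · have hcongr : ∀ t ∈ Ioo (0:ℝ) ρ, g i t / ENNReal.ofReal t
          = wolffIntegrand n p μ x (ε ^ (-((i:ℝ)+1)) * t) / ENNReal.ofReal t := by
        intro t ht
        have : ε ^ (-((i:ℝ)+1)) * t ≤ R/2 :=
          le_trans (by nlinarith [ht.2, (hcpos i)]) hcase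
        simp only [hgdef, this, if_true]
      have hval : (∫⁻ t in Ioo (0:ℝ) ρ, g i t / ENNReal.ofReal t)
          = wolffPotential n p μ x (ε ^ (-((i:ℝ)+1)) * ρ) := by
        rw [setLIntegral_congr_fun measurableSet_Ioo hcongr,
          scale_lintegral hmeas_h (hcpos i)]
        rfl
      rw [hval]
      refine le_trans ?_ le_self_add
      simp only [hTdef, hcase, if_true, le_refl]
    · set b : ℝ := ε ^ (((i:ℝ)+1)) * (R/2) with hbdef
      have hb0 : 0 < b := mul_pos (hccpos i) (by linarith)
      have hbρ : b < ρ := by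
        push_neg at hcase
        have h1 : ε ^ (((i:ℝ)+1)) * (R/2) < ε ^ (((i:ℝ)+1)) * (ε ^ (-((i:ℝ)+1)) * ρ) :=
          (mul_lt_mul_iff_right₀ (hccpos i)).2 hcase
        calc b = ε ^ (((i:ℝ)+1)) * (R/2) := rfl
          _ < ε ^ (((i:ℝ)+1)) * (ε ^ (-((i:ℝ)+1)) * ρ) := h1
          _ = ρ := by rw [← mul_assoc, mul_comm (ε ^ (((i:ℝ)+1))), hmulinv i, one_mul]
      have hcb : ε ^ (-((i:ℝ)+1)) * b = R/2 := by
        rw [hbdef, ← mul_assoc, hmulinv i, one_mul]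
      have hdisj : Disjoint (Ioo (0:ℝ) b) (Ico b ρ) := by
        rw [Set.disjoint_left]
        intro t ht1 ht2
        exact absurd ht2.1 (not_le.2 ht1.2)
      have hsplit : Ioo (0:ℝ) ρ = Ioo (0:ℝ) b ∪ Ico b ρ :=
        (Ioo_union_Ico_eq_Ioo hb0 hbρ.le).symm
      rw [hsplit, lintegral_union measurableSet_Ico hdisj]
      have part1 : (∫⁻ t in Ioo (0:ℝ) b, g i t / ENNReal.ofReal t) = T i := by
        have hcongr : ∀ t ∈ Ioo (0:ℝ) b, g i t / ENNReal.ofReal t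
            = wolffIntegrand n p μ x (ε ^ (-((i:ℝ)+1)) * t) / ENNReal.ofReal t := by
          intro t ht
          have : ε ^ (-((i:ℝ)+1)) * t ≤ R/2 := by
            rw [← hcb]
            exact (mul_le_mul_iff_right₀ (hcpos i)).2 ht.2.le
          simp only [hgdef, this, if_true]
        rw [setLIntegral_congr_fun measurableSet_Ioo hcongr,
          scale_lintegral hmeas_h (hcpos i), hcb]
        simp only [hTdef, hcase, if_false]
        rfl
      have part2 : (∫⁻ t in Ico b ρ, g i t / ENNReal.ofReal t) = h2 * O i := by
        have hcongr : ∀ t ∈ Ico b ρ, g i t / ENNReal.ofReal t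
            = h2 * (ENNReal.ofReal t)⁻¹ := by
          intro t ht
          have hbt : R/2 ≤ ε ^ (-((i:ℝ)+1)) * t := by
            rw [← hcb]
            exact (mul_le_mul_iff_right₀ (hcpos i)).2 ht.1
          rw [div_eq_mul_inv]
          congr 1
          simp only [hgdef]
          split
          · next hle =>
            have : ε ^ (-((i:ℝ)+1)) * t = R/2 := le_antisymm hle hbt
            rw [this]
          · rfl
        rw [setLIntegral_congr_fun measurableSet_Ico hcongr,
          lintegral_const_mul _ (by fun_prop),
          Measure.restrict_congr_set (MeasureTheory.Ioo_ae_eq_Ico).symm,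
          lintegral_inv_Ioo hb0 hbρ.le]
        congr 1
        have hcond : ε ^ ((i:ℝ)+1) < 2*ρ/R := by
          rw [lt_div_iff₀ hR]
          nlinarith [hbρ]
        simp only [hOdef, hcond, if_true]
        congr 1
        rw [hbdef]
        rw [Real.rpow_neg hε0.le]
        field_simp
      rw [part1, part2]
  -- Step C : sum the bounds
  calc (∫⁻ t in Ioo (0:ℝ) ρ, (∑' i : ℕ, coef i * g i t) / ENNReal.ofReal t)
      = ∑' i : ℕ, coef i * ∫⁻ t in Ioo (0:ℝ) ρ, g i t / ENNReal.ofReal t := stepA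
    _ ≤ ∑' i : ℕ, coef i * (T i + h2 * O i) :=
        ENNReal.tsum_le_tsum fun i => mul_le_mul_right (stepB i) _
    _ = (∑' i : ℕ, coef i * T i) + ∑' i : ℕ, h2 * (coef i * O i) := by
        have : ∀ i : ℕ, coef i * (T i + h2 * O i)
            = coef i * T i + h2 * (coef i * O i) := by
          intro i
          rw [mul_add]
          congr 1
          ring
        rw [tsum_congr this, ENNReal.tsum_add]
    _ = (∑' i : ℕ, coef i * T i) + h2 * ∑' i : ℕ, (coef i * O i) := by
        rw [ENNReal.tsum_mul_left]
    _ ≤ (∑' i : ℕ, coef i * T i)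
        + (ENNReal.ofReal K * wolffPotential n p μ x R) * ENNReal.ofReal (C'' * (2*ρ/R) ^ α₁) := by
        refine add_le_add le_rfl ?_
        apply mul_le_mul'
        · exact wolffIntegrand_half_le n p hp μ x hR
        · have hsum_eq : (∑' i : ℕ, coef i * O i)
              = ∑' i : ℕ, (if ε ^ ((i:ℝ)+1) < 2*ρ/R
                  then ENNReal.ofReal (ε ^ (α₁*((i:ℝ)+1)))
                    * ENNReal.ofReal (Real.log ((2*ρ/R) * ε ^ (-((i:ℝ)+1))))
                  else 0) := by
            refine tsum_congr fun i => ?_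
            simp only [hOdef, hcoefdef, mul_ite, mul_zero]
          rw [hsum_eq]
          exact geom_log_sum_bound hε0 hε1 hα (2*ρ/R) (by positivity)
    _ = (∑' i : ℕ, coef i * T i)
        + ENNReal.ofReal ((K * C'' * 2 ^ α₁) * (ρ/R) ^ α₁) * wolffPotential n p μ x R := by
        congr 1
        rw [mul_comm (ENNReal.ofReal K * wolffPotential n p μ x R), ← mul_assoc,
          ← ENNReal.ofReal_mul (by positivity)]
        congr 2
        have h2ρ : 2*ρ/R = 2*(ρ/R) := by ring
        rw [h2ρ, Real.mul_rpow zero_le_two (by positivity)]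
        ring
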